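/- If r/a = [α₁,...,αₙ] is a Hirzebruch-Jung continued fraction expansion, then r/a⁻¹ = [αₙ,...,α₁], where a⁻¹ denotes the inverse of a modulo r with 0 < a⁻¹ < r. -/

import Mathlib

/-- Hirzebruch-Jung continued fraction: `hjCont [a1,...,an] = (p, q)` means
`[a1,...,an] = p/q` with `p, q` the standard (coprime) continuants. -/
def hjCont : List ℤ → ℤ × ℤ
  | [] => (1, 0)
  | a :: l => (a * (hjCont l).1 - (hjCont l).2, (hjCont l).1)

/-- Second column of the continuant matrix. -/
def hjG : List ℤ → ℤ × ℤ
  | [] => (0, 1)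
  | a :: l => (a * (hjG l).1 - (hjG l).2, (hjG l).1)

lemma hj_append (l : List ℤ) (a : ℤ) :
    hjCont (l ++ [a]) = (a * (hjCont l).1 + (hjG l).1, a * (hjCont l).2 + (hjG l).2) ∧
    hjG (l ++ [a]) = (-(hjCont l).1, -(hjCont l).2) := by
  induction l with
  | nil => simp [hjCont, hjG]
  | cons x l ih =>
      obtain ⟨ih1, ih2⟩ := ih
      constructor <;> simp [hjCont, hjG, ih1, ih2] <;> ring

lemma hj_reverse (l : List ℤ) :
    hjCont l.reverse = ((hjCont l).1, -(hjG l).1) ∧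
    hjG l.reverse = (-(hjCont l).2, (hjG l).2) := by
  induction l with
  | nil => simp [hjCont, hjG]
  | cons x l ih =>
      obtain ⟨ih1, ih2⟩ := ih
      have h := hj_append l.reverse x
      simp only [List.reverse_cons]
      rw [h.1, h.2, ih1, ih2]
      constructor <;> (simp only [hjCont, hjG, Prod.mk.injEq, neg_neg, true_and] <;> constructor <;> ring)

lemma hj_det (l : List ℤ) :
    (hjCont l).1 * (hjG l).2 - (hjG l).1 * (hjCont l).2 = 1 := by
  induction l with
  | nil => simp [hjCont, hjG]
  | cons x l ih => simp [hjCont, hjG]; nlinarith [ih]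

lemma hj_pos (l : List ℤ) (h : ∀ x ∈ l, 2 ≤ x) (hne : l ≠ []) :
    0 < (hjCont l).2 ∧ (hjCont l).2 < (hjCont l).1 := by
  induction l with
  | nil => exact absurd rfl hne
  | cons x l ih =>
      have hx : 2 ≤ x := h x (by simp)
      rcases eq_or_ne l [] with rfl | hl
      · simp [hjCont]; omega
      · obtain ⟨h1, h2⟩ := ih (fun y hy => h y (by simp [hy])) hl
        constructor
        · simpa [hjCont] using h1.trans h2
        · simp only [hjCont]
          nlinarith

theorem stmt3 (r a b : ℤ) (hcop : IsCoprime r a) (h1 : 0 < a) (h2 : a < r)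
    (αs : List ℤ) (hα : ∀ x ∈ αs, 2 ≤ x) (hαs : hjCont αs = (r, a))
    (hb1 : 0 < b) (hb2 : b < r) (hab : a * b % r = 1 % r) :
    hjCont αs.reverse = (r, b) := by
  have hne : αs ≠ [] := by
    rintro rfl
    simp [hjCont] at hαs
    omega
  have hrev := (hj_reverse αs).1
  have hdet := hj_det αs
  rw [hαs] at hrev hdet
  simp only at hrev hdet
  set g1 := (hjG αs).1 with hg1
  set g2 := (hjG αs).2 with hg2
  -- positivity for the reversed list
  have hposrev := hj_pos αs.reverse (fun x hx => hα x (List.mem_reverse.mp hx))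
    (by simpa using hne)
  rw [hrev] at hposrev
  simp only at hposrev
  obtain ⟨hq1, hq2⟩ := hposrev
  -- a * (-g1) ≡ 1 mod r
  have hmod : r ∣ a * b - 1 := by
    have : (a * b : ℤ) ≡ 1 [ZMOD r] := by
      simpa [Int.ModEq, Int.emod_emod_of_dvd] using hab
    exact (Int.modEq_iff_dvd.mp this.symm)
  have hmod2 : r ∣ a * (-g1) - 1 := ⟨-g2, by linarith⟩
  have hdvd : r ∣ a * (b - (-g1)) := by
    have : a * (b - (-g1)) = (a * b - 1) - (a * (-g1) - 1) := by ring
    rw [this]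
    exact dvd_sub hmod hmod2
  have hdvd2 : r ∣ b - (-g1) := (hcop.dvd_of_dvd_mul_left hdvd)
  have hb : b = -g1 := by
    rcases hdvd2 with ⟨k, hk⟩
    have hr : 0 < r := h1.trans h2
    have h4 : (-1 : ℤ) < k := lt_of_mul_lt_mul_left (a := r) (by nlinarith) hr.le
    have h5 : k < 1 := lt_of_mul_lt_mul_left (a := r) (by nlinarith) hr.le
    have hk0 : k = 0 := by omega
    rw [hk0, mul_zero] at hk
    omega
  rw [hrev, hb]
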